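/- Let X be the allocation produced by the Load Balancing Algorithm for n agents with an identical additive cost function c where every item has cost at most 1. Then the total subsidy ∑_i max{c(X_i) − c(M)/n, 0} is at most n/4 when n is even, and at most (n²−1)/(4n) when n is odd. -/

import Mathlib

open Finset

lemma subsidy_aux (n : ℕ) (hn : 0 < n) (d : Fin n → ℝ) (hdsum : ∑ i, d i = 0)
    (hdk : ∀ i k, d i ≤ d k + 1) :
    (Even n → ∑ i, max (d i) 0 ≤ (n : ℝ) / 4) ∧
    (Odd n → ∑ i, max (d i) 0 ≤ ((n : ℝ) ^ 2 - 1) / (4 * n)) := by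
  have hn' : (0:ℝ) < n := by exact_mod_cast hn
  set T := Finset.univ.filter (fun i => 0 < d i) with hT
  set T' := Finset.univ.filter (fun i => ¬ 0 < d i) with hT'
  set p := T.card with hp
  set q := T'.card with hq
  have hpq : p + q = n := by
    rw [hp, hq, hT, hT', Finset.card_filter_add_card_filter_not]
    simp
  set P := ∑ i ∈ T, d i with hPdef
  have hPeq : ∑ i, max (d i) 0 = P := by
    rw [← Finset.sum_filter_add_sum_filter_not univ (fun i => 0 < d i)
      (fun i => max (d i) 0)]
    have h1 : ∑ i ∈ T, max (d i) 0 = P :=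
      Finset.sum_congr rfl fun i hi => max_eq_left (le_of_lt (Finset.mem_filter.1 hi).2)
    have h2 : ∑ i ∈ T', max (d i) 0 = 0 :=
      Finset.sum_eq_zero fun i hi => max_eq_right (le_of_not_gt (Finset.mem_filter.1 hi).2)
    rw [← hT, ← hT', h1, h2, add_zero]
  have hP' : ∑ i ∈ T', d i = -P := by
    have h := Finset.sum_filter_add_sum_filter_not univ (fun i => 0 < d i) d
    rw [← hT, ← hT', hdsum] at h
    linarith
  have hpqR : (p:ℝ) + q = n := by exact_mod_cast hpq
  have hmain : (n:ℝ) * P ≤ p * q := by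
    rcases Nat.eq_zero_or_pos p with hp0 | hppos
    · have hTe : T = ∅ := Finset.card_eq_zero.mp hp0
      rw [hPdef, hTe]
      simp [hp0]
    rcases Nat.eq_zero_or_pos q with hq0 | hqpos
    · exfalso
      have hT'e : T' = ∅ := Finset.card_eq_zero.mp hq0
      have hall : ∀ i : Fin n, 0 < d i := by
        intro i
        by_contra hcon
        have : i ∈ T' := Finset.mem_filter.2 ⟨Finset.mem_univ i, hcon⟩
        rw [hT'e] at this
        exact absurd this (Finset.notMem_empty i)
      have : Nonempty (Fin n) := ⟨⟨0, hn⟩⟩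
      have hpos : 0 < ∑ i, d i :=
        Finset.sum_pos (fun i _ => hall i) Finset.univ_nonempty
      linarith
    · have hineq : ∑ i ∈ T, ∑ _j ∈ T', d i ≤ ∑ i ∈ T, ∑ j ∈ T', (d j + 1) :=
        Finset.sum_le_sum fun i _ => Finset.sum_le_sum fun j _ => hdk i j
      have hL : ∑ i ∈ T, ∑ _j ∈ T', d i = q * P := by
        simp only [Finset.sum_const, nsmul_eq_mul]
        rw [← Finset.mul_sum]
      have hR : ∑ i ∈ T, ∑ j ∈ T', (d j + 1) = p * (-P + q) := by
        rw [Finset.sum_const, nsmul_eq_mul]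
        congr 1
        rw [Finset.sum_add_distrib, hP', Finset.sum_const, nsmul_eq_mul, mul_one]
      rw [hL, hR] at hineq
      have hnp : (n:ℝ) * P = p * P + q * P := by rw [← hpqR]; ring
      nlinarith [hineq, hnp]
  constructor
  · intro _
    rw [hPeq]
    have h4 : (p:ℝ) * q ≤ (n:ℝ)^2 / 4 := by nlinarith [sq_nonneg ((p:ℝ) - q)]
    rw [le_div_iff₀ (by norm_num : (0:ℝ) < 4)]
    nlinarith
  · intro hodd
    rw [hPeq]
    have hne : p ≠ q := by
      intro h
      rw [h] at hpq
      have : Even n := ⟨q, by omega⟩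
      exact (Nat.not_even_iff_odd.mpr hodd) this
    have h1 : (1:ℝ) ≤ ((p:ℝ) - q)^2 := by
      have hz : (p:ℤ) - q ≠ 0 := sub_ne_zero.mpr (by exact_mod_cast hne)
      have habs := Int.one_le_abs hz
      have : (1:ℤ) ≤ ((p:ℤ) - q)^2 := by nlinarith [sq_abs ((p:ℤ) - q)]
      exact_mod_cast this
    have h4 : (p:ℝ) * q ≤ ((n:ℝ)^2 - 1) / 4 := by nlinarith
    rw [le_div_iff₀ (by positivity : (0:ℝ) < 4 * n)]
    nlinarith

/-- Total subsidy bound for the Load Balancing allocation with identical additive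
costs where every item costs at most 1: `∑ i, max (c(X_i) - c(M)/n) 0 ≤ n/4` when
`n` is even, and `≤ (n² - 1)/(4n)` when `n` is odd. The run of the algorithm is
described by the assignment `a` as in the algorithm's invariant. -/
theorem loadBalancing_subsidy_bound (n m : ℕ) (hn : 0 < n) (c : Fin m → ℝ)
    (hc : ∀ e, 0 ≤ c e ∧ c e ≤ 1)
    (hsort : ∀ j k : Fin m, j ≤ k → c k ≤ c j)
    (a : Fin m → Fin n)
    (halg : ∀ (j : Fin m) (i : Fin n),
      ∑ e ∈ Finset.univ.filter (fun e => e < j ∧ a e = a j), c e ≤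
        ∑ e ∈ Finset.univ.filter (fun e => e < j ∧ a e = i), c e) :
    (Even n →
      ∑ i : Fin n,
        max ((∑ e ∈ Finset.univ.filter (fun e => a e = i), c e) - (∑ e', c e') / n) 0
        ≤ (n : ℝ) / 4) ∧
    (Odd n →
      ∑ i : Fin n,
        max ((∑ e ∈ Finset.univ.filter (fun e => a e = i), c e) - (∑ e', c e') / n) 0
        ≤ ((n : ℝ) ^ 2 - 1) / (4 * n)) := by
  have hn' : (0:ℝ) < n := by exact_mod_cast hn
  set L : Fin n → ℝ := fun i => ∑ e ∈ Finset.univ.filter (fun e => a e = i), c e with hLdef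
  have hLnn : ∀ i, 0 ≤ L i := fun i => Finset.sum_nonneg fun e _ => (hc e).1
  have htot : ∑ i, L i = ∑ e', c e' := Finset.sum_fiberwise univ a c
  have hkey : ∀ i k : Fin n, L i ≤ L k + 1 := by
    intro i k
    by_cases hS : (Finset.univ.filter (fun e => a e = i)).Nonempty
    · set j := (Finset.univ.filter (fun e => a e = i)).max' hS with hjdef
      have hjmem := (Finset.univ.filter (fun e => a e = i)).max'_mem hS
      have hja : a j = i := (Finset.mem_filter.1 hjmem).2
      have hsplit : Finset.univ.filter (fun e => a e = i)
          = insert j (Finset.univ.filter (fun e => e < j ∧ a e = i)) := by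
        ext e
        simp only [Finset.mem_filter, Finset.mem_insert, Finset.mem_univ, true_and]
        constructor
        · intro he
          have hem : e ∈ Finset.univ.filter (fun e => a e = i) :=
            Finset.mem_filter.2 ⟨Finset.mem_univ e, he⟩
          rcases lt_or_eq_of_le (Finset.le_max'
            (Finset.univ.filter (fun e => a e = i)) e hem) with h | h
          · exact Or.inr ⟨h, he⟩
          · exact Or.inl h
        · rintro (rfl | ⟨_, he⟩)
          · exact hja
          · exact he
      have hnot : j ∉ Finset.univ.filter (fun e => e < j ∧ a e = i) := by simp
      have hLi : L i = c j + ∑ e ∈ Finset.univ.filter (fun e => e < j ∧ a e = i), c e := by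
        show (∑ e ∈ Finset.univ.filter (fun e => a e = i), c e) = _
        rw [hsplit, Finset.sum_insert hnot]
      have h1 := halg j k
      rw [hja] at h1
      have h2 : ∑ e ∈ Finset.univ.filter (fun e => e < j ∧ a e = k), c e ≤ L k := by
        apply Finset.sum_le_sum_of_subset_of_nonneg
        · intro e he
          simp only [Finset.mem_filter, Finset.mem_univ, true_and] at he ⊢
          exact he.2
        · intro e _ _; exact (hc e).1
      have h3 := (hc j).2
      linarith
    · have hz : L i = 0 := by
        rw [Finset.not_nonempty_iff_eq_empty] at hS
        show (∑ e ∈ Finset.univ.filter (fun e => a e = i), c e) = 0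
        rw [hS, Finset.sum_empty]
      rw [hz]
      linarith [hLnn k]
  have hdsum : ∑ i, (L i - (∑ e', c e') / n) = 0 := by
    rw [Finset.sum_sub_distrib, Finset.sum_const, htot, Finset.card_univ, Fintype.card_fin,
      nsmul_eq_mul]
    field_simp
    ring
  have hdk : ∀ i k, (L i - (∑ e', c e') / n) ≤ (L k - (∑ e', c e') / n) + 1 := by
    intro i k; linarith [hkey i k]
  exact subsidy_aux n hn (fun i => L i - (∑ e', c e') / n) hdsum hdk
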